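/- arXiv:2009.01550 — 2 statements merged into one kernel-verified Lean document; each statement's English description precedes it below -/
import Mathlib

section
/- Let u be a nonnegative measurable function on ℝⁿ with finite L¹ and L^∞ norms, and fix R = ‖u‖₁^{1/n} ‖u‖_∞^{-1/n}. Then for every x ∈ ℝⁿ, ∫_{B_R(x)} |u(z)|/|x−z|^{n−1} dz ≤ C ‖u‖_∞ R and ∫_{ℝⁿ \ B_R(x)} |u(z)|/|x−z|^{n−1} dz ≤ C ‖u‖_{3/2} R^{1−2n/3}, where C depends only on n ≥ 2. -/
open MeasureTheory Real Metric
open scoped ENNReal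

theorem my_cover_near {X : Type*} [MetricSpace X] (x : X) (R : ℝ) :
    ball x R ⊆ {x} ∪ ⋃ k : ℕ, (ball x (R * (2:ℝ)⁻¹ ^ k) \ ball x (R * (2:ℝ)⁻¹ ^ (k+1))) := by
  intro z hz
  rcases eq_or_ne z x with h | h
  · exact Or.inl h
  have hd : 0 < dist z x := dist_pos.2 h
  have hR : 0 < R := lt_trans hd (mem_ball.1 hz)
  have hex : ∃ k : ℕ, R * (2:ℝ)⁻¹ ^ (k+1) ≤ dist z x := by
    obtain ⟨k0, hk0⟩ := exists_pow_lt_of_lt_one (div_pos hd hR) (by norm_num : (2:ℝ)⁻¹ < 1)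
    refine ⟨k0, ?_⟩
    have h1 : ((2:ℝ)⁻¹) ^ (k0+1) ≤ (2:ℝ)⁻¹ ^ k0 :=
      pow_le_pow_of_le_one (by norm_num) (by norm_num) (by omega)
    have h2 : R * (2:ℝ)⁻¹ ^ k0 < dist z x := by
      rw [mul_comm]
      exact (lt_div_iff₀ hR).1 hk0
    nlinarith
  right
  refine Set.mem_iUnion.2 ⟨Nat.find hex, ?_, ?_⟩
  · rcases Nat.eq_zero_or_pos (Nat.find hex) with h0 | h0
    · rw [h0]; simpa using mem_ball.1 hz
    · obtain ⟨k', hk'⟩ := Nat.exists_eq_add_of_lt h0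
      have := Nat.find_min hex (m := k') (by omega)
      rw [mem_ball, hk']
      simp only [zero_add] at hk' ⊢
      push_neg at this
      simpa [hk'] using this
  · intro hmem
    exact absurd (Nat.find_spec hex) (not_le.2 (mem_ball.1 hmem))

theorem my_cover_far {X : Type*} [MetricSpace X] (x : X) (R : ℝ) (hR : 0 < R) :
    (ball x R)ᶜ ⊆ ⋃ k : ℕ, (ball x (R * (2:ℝ) ^ (k+1)) \ ball x (R * (2:ℝ) ^ k)) := by
  intro z hz
  have hd : R ≤ dist z x := not_lt.1 (fun h => hz (mem_ball.2 h))
  have hex : ∃ k : ℕ, dist z x < R * (2:ℝ) ^ (k+1) := by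
    obtain ⟨k0, hk0⟩ := pow_unbounded_of_one_lt (dist z x / R) (by norm_num : (1:ℝ) < 2)
    refine ⟨k0, ?_⟩
    have h2 : dist z x < R * (2:ℝ) ^ k0 := by
      rw [mul_comm]; exact (div_lt_iff₀ hR).1 hk0
    calc dist z x < R * (2:ℝ) ^ k0 := h2
      _ ≤ R * (2:ℝ) ^ (k0+1) := by
          rw [pow_succ]
          nlinarith [pow_pos (by norm_num : (0:ℝ) < 2) k0]
  refine Set.mem_iUnion.2 ⟨Nat.find hex, mem_ball.2 (Nat.find_spec hex), ?_⟩
  intro hmem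
  rcases Nat.eq_zero_or_pos (Nat.find hex) with h0 | h0
  · rw [h0] at hmem
    simp only [pow_zero, mul_one] at hmem
    exact absurd (mem_ball.1 hmem) (not_lt.2 hd)
  · obtain ⟨k', hk'⟩ := Nat.exists_eq_add_of_lt h0
    simp only [zero_add] at hk'
    have := Nat.find_min hex (m := k') (by omega)
    rw [hk'] at hmem
    exact this (mem_ball.1 hmem)

theorem my_near_bound (m : ℕ) (x : EuclideanSpace ℝ (Fin (m+1))) (R : ℝ) (hR : 0 < R) :
    ∫⁻ z in ball x R, ENNReal.ofReal ((‖x - z‖ ^ m)⁻¹) ≤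
      2 ^ (m+1) * volume (ball (0 : EuclideanSpace ℝ (Fin (m+1))) 1) * ENNReal.ofReal R := by
  set v := volume (ball (0 : EuclideanSpace ℝ (Fin (m+1))) 1) with hv
  have key : ∀ k : ℕ,
      ∫⁻ z in ball x (R * (2:ℝ)⁻¹ ^ k) \ ball x (R * (2:ℝ)⁻¹ ^ (k+1)),
        ENNReal.ofReal ((‖x - z‖ ^ m)⁻¹)
      ≤ ENNReal.ofReal (R * 2 ^ m) * ((2:ℝ≥0∞)⁻¹) ^ k * v := by
    intro k
    have hrk : 0 < R * (2:ℝ)⁻¹ ^ (k+1) := by positivity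
    calc ∫⁻ z in ball x (R * (2:ℝ)⁻¹ ^ k) \ ball x (R * (2:ℝ)⁻¹ ^ (k+1)),
          ENNReal.ofReal ((‖x - z‖ ^ m)⁻¹)
        ≤ ∫⁻ _ in ball x (R * (2:ℝ)⁻¹ ^ k) \ ball x (R * (2:ℝ)⁻¹ ^ (k+1)),
          ENNReal.ofReal (((R * (2:ℝ)⁻¹ ^ (k+1)) ^ m)⁻¹) := by
          refine setLIntegral_mono measurable_const (fun z hz => ?_)
          have h1 : R * (2:ℝ)⁻¹ ^ (k+1) ≤ dist z x := not_lt.1 (fun h => hz.2 (mem_ball.2 h))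
          have h2 : R * (2:ℝ)⁻¹ ^ (k+1) ≤ ‖x - z‖ := by
            rwa [dist_eq_norm, norm_sub_rev] at h1
          exact ENNReal.ofReal_le_ofReal
            (inv_anti₀ (pow_pos hrk m) (pow_le_pow_left₀ hrk.le h2 m))
      _ = ENNReal.ofReal (((R * (2:ℝ)⁻¹ ^ (k+1)) ^ m)⁻¹) *
            volume (ball x (R * (2:ℝ)⁻¹ ^ k) \ ball x (R * (2:ℝ)⁻¹ ^ (k+1))) :=
          setLIntegral_const _ _
      _ ≤ ENNReal.ofReal (((R * (2:ℝ)⁻¹ ^ (k+1)) ^ m)⁻¹) * volume (ball x (R * (2:ℝ)⁻¹ ^ k)) := by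
          gcongr
          exact Set.diff_subset
      _ = ENNReal.ofReal (((R * (2:ℝ)⁻¹ ^ (k+1)) ^ m)⁻¹) *
            (ENNReal.ofReal ((R * (2:ℝ)⁻¹ ^ k) ^ (m+1)) * v) := by
          rw [Measure.addHaar_ball _ _ (by positivity)]
          simp [hv]
      _ = ENNReal.ofReal (R * 2 ^ m) * ((2:ℝ≥0∞)⁻¹) ^ k * v := by
          rw [← mul_assoc, ← ENNReal.ofReal_mul (by positivity)]
          congr 1
          have hid : ((R * (2:ℝ)⁻¹ ^ (k+1)) ^ m)⁻¹ * (R * (2:ℝ)⁻¹ ^ k) ^ (m+1)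
              = R * 2 ^ m * (2:ℝ)⁻¹ ^ k := by
            have hR' : R ≠ 0 := hR.ne'
            have key2 : ∀ a : ℝ, a ≠ 0 → ((R * a ^ (k+1)) ^ m)⁻¹ * (R * a ^ k) ^ (m+1)
                = R * (a ^ m)⁻¹ * a ^ k := by
              intro a ha; field_simp; ring
            rw [key2 _ (by norm_num)]
            simp only [inv_pow, inv_inv]
          rw [hid, ENNReal.ofReal_mul (by positivity), ENNReal.ofReal_pow (by norm_num)]
          congr 2
          rw [ENNReal.ofReal_inv_of_pos (by norm_num)]
          norm_num
  calc ∫⁻ z in ball x R, ENNReal.ofReal ((‖x - z‖ ^ m)⁻¹)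
      ≤ ∫⁻ z in ({x} ∪ ⋃ k : ℕ, (ball x (R * (2:ℝ)⁻¹ ^ k) \ ball x (R * (2:ℝ)⁻¹ ^ (k+1)))),
          ENNReal.ofReal ((‖x - z‖ ^ m)⁻¹) := lintegral_mono_set (my_cover_near x R)
    _ ≤ (∫⁻ z in ({x} : Set _), ENNReal.ofReal ((‖x - z‖ ^ m)⁻¹)) +
          ∫⁻ z in (⋃ k : ℕ, (ball x (R * (2:ℝ)⁻¹ ^ k) \ ball x (R * (2:ℝ)⁻¹ ^ (k+1)))),
          ENNReal.ofReal ((‖x - z‖ ^ m)⁻¹) := lintegral_union_le _ _ _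
    _ ≤ 0 + ∑' k : ℕ, ∫⁻ z in ball x (R * (2:ℝ)⁻¹ ^ k) \ ball x (R * (2:ℝ)⁻¹ ^ (k+1)),
          ENNReal.ofReal ((‖x - z‖ ^ m)⁻¹) := by
          gcongr
          · exact le_of_eq (setLIntegral_measure_zero _ _ (measure_singleton x))
          · exact lintegral_iUnion_le _ _
    _ ≤ 0 + ∑' k : ℕ, ENNReal.ofReal (R * 2 ^ m) * ((2:ℝ≥0∞)⁻¹) ^ k * v := by
          gcongr with k
          exact key k
    _ = 2 ^ (m+1) * v * ENNReal.ofReal R := by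
          rw [zero_add]
          rw [ENNReal.tsum_mul_right, ENNReal.tsum_mul_left, ENNReal.tsum_geometric]
          rw [ENNReal.ofReal_mul hR.le, ENNReal.ofReal_pow (by norm_num)]
          simp only [ENNReal.one_sub_inv_two, inv_inv, ENNReal.ofReal_ofNat]
          ring

theorem my_far_bound (j : ℕ) (x : EuclideanSpace ℝ (Fin (j+2))) (R : ℝ) (hR : 0 < R) :
    ∫⁻ z in (ball x R)ᶜ, ENNReal.ofReal ((‖x - z‖ ^ (3*j+3))⁻¹) ≤
      2 ^ (j+3) * volume (ball (0 : EuclideanSpace ℝ (Fin (j+2))) 1) *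
        ENNReal.ofReal ((R ^ (2*j+1))⁻¹) := by
  set v := volume (ball (0 : EuclideanSpace ℝ (Fin (j+2))) 1) with hv
  have key : ∀ k : ℕ,
      ∫⁻ z in ball x (R * (2:ℝ) ^ (k+1)) \ ball x (R * (2:ℝ) ^ k),
        ENNReal.ofReal ((‖x - z‖ ^ (3*j+3))⁻¹)
      ≤ ENNReal.ofReal ((R ^ (2*j+1))⁻¹ * 2 ^ (j+2)) * ((2:ℝ≥0∞)⁻¹) ^ k * v := by
    intro k
    have hrk : 0 < R * (2:ℝ) ^ k := by positivity
    calc ∫⁻ z in ball x (R * (2:ℝ) ^ (k+1)) \ ball x (R * (2:ℝ) ^ k),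
          ENNReal.ofReal ((‖x - z‖ ^ (3*j+3))⁻¹)
        ≤ ∫⁻ _ in ball x (R * (2:ℝ) ^ (k+1)) \ ball x (R * (2:ℝ) ^ k),
          ENNReal.ofReal (((R * (2:ℝ) ^ k) ^ (3*j+3))⁻¹) := by
          refine setLIntegral_mono measurable_const (fun z hz => ?_)
          have h1 : R * (2:ℝ) ^ k ≤ dist z x := not_lt.1 (fun h => hz.2 (mem_ball.2 h))
          have h2 : R * (2:ℝ) ^ k ≤ ‖x - z‖ := by
            rwa [dist_eq_norm, norm_sub_rev] at h1
          exact ENNReal.ofReal_le_ofReal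
            (inv_anti₀ (pow_pos hrk _) (pow_le_pow_left₀ hrk.le h2 _))
      _ = ENNReal.ofReal (((R * (2:ℝ) ^ k) ^ (3*j+3))⁻¹) *
            volume (ball x (R * (2:ℝ) ^ (k+1)) \ ball x (R * (2:ℝ) ^ k)) :=
          setLIntegral_const _ _
      _ ≤ ENNReal.ofReal (((R * (2:ℝ) ^ k) ^ (3*j+3))⁻¹) *
            volume (ball x (R * (2:ℝ) ^ (k+1))) := by
          gcongr
          exact Set.diff_subset
      _ = ENNReal.ofReal (((R * (2:ℝ) ^ k) ^ (3*j+3))⁻¹) *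
            (ENNReal.ofReal ((R * (2:ℝ) ^ (k+1)) ^ (j+2)) * v) := by
          rw [Measure.addHaar_ball _ _ (by positivity)]
          simp [hv]
      _ ≤ ENNReal.ofReal ((R ^ (2*j+1))⁻¹ * 2 ^ (j+2)) * ((2:ℝ≥0∞)⁻¹) ^ k * v := by
          rw [← mul_assoc, ← ENNReal.ofReal_mul (by positivity)]
          have hid : ((R * (2:ℝ) ^ k) ^ (3*j+3))⁻¹ * (R * (2:ℝ) ^ (k+1)) ^ (j+2)
              = (R ^ (2*j+1))⁻¹ * 2 ^ (j+2) * ((2:ℝ)⁻¹) ^ (k*(2*j+1)) := by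
            have hR' : R ≠ 0 := hR.ne'
            have key2 : ∀ a : ℝ, a ≠ 0 → ((R * a ^ k) ^ (3*j+3))⁻¹ * (R * a ^ (k+1)) ^ (j+2)
                = (R ^ (2*j+1))⁻¹ * a ^ (j+2) * (a ^ (k*(2*j+1)))⁻¹ := by
              intro a ha; field_simp; ring
            rw [key2 _ two_ne_zero, inv_pow]
          rw [hid, ENNReal.ofReal_mul (by positivity), ENNReal.ofReal_pow (by norm_num)]
          have h2 : ENNReal.ofReal ((2:ℝ)⁻¹) = (2:ℝ≥0∞)⁻¹ := by
            rw [ENNReal.ofReal_inv_of_pos (by norm_num)]; norm_num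
          rw [h2]
          refine mul_le_mul' (mul_le_mul' le_rfl ?_) le_rfl
          exact pow_le_pow_of_le_one zero_le (by simp [ENNReal.inv_le_one])
            (Nat.le_mul_of_pos_right k (by omega))
  calc ∫⁻ z in (ball x R)ᶜ, ENNReal.ofReal ((‖x - z‖ ^ (3*j+3))⁻¹)
      ≤ ∫⁻ z in (⋃ k : ℕ, (ball x (R * (2:ℝ) ^ (k+1)) \ ball x (R * (2:ℝ) ^ k))),
          ENNReal.ofReal ((‖x - z‖ ^ (3*j+3))⁻¹) := lintegral_mono_set (my_cover_far x R hR)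
    _ ≤ ∑' k : ℕ, ∫⁻ z in ball x (R * (2:ℝ) ^ (k+1)) \ ball x (R * (2:ℝ) ^ k),
          ENNReal.ofReal ((‖x - z‖ ^ (3*j+3))⁻¹) := lintegral_iUnion_le _ _
    _ ≤ ∑' k : ℕ, ENNReal.ofReal ((R ^ (2*j+1))⁻¹ * 2 ^ (j+2)) * ((2:ℝ≥0∞)⁻¹) ^ k * v := by
          gcongr with k
          exact key k
    _ = 2 ^ (j+3) * v * ENNReal.ofReal ((R ^ (2*j+1))⁻¹) := by
          rw [ENNReal.tsum_mul_right, ENNReal.tsum_mul_left, ENNReal.tsum_geometric]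
          rw [ENNReal.ofReal_mul (by positivity), ENNReal.ofReal_pow (by norm_num)]
          simp only [ENNReal.one_sub_inv_two, inv_inv, ENNReal.ofReal_ofNat]
          ring



/-- Splitting estimate used in the potential bound: for `n ≥ 2`, nonnegative measurable
`u ∈ L¹ ∩ L^∞` and `R = ‖u‖₁^{1/n} ‖u‖_∞^{-1/n}`, the near and far parts of the Riesz
potential integral satisfy the stated bounds, with `C` depending only on `n`. -/
theorem stmt1 (n : ℕ) (hn : 2 ≤ n) :
    ∃ C : ℝ, 0 < C ∧
      ∀ u : EuclideanSpace ℝ (Fin n) → ℝ,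
        Measurable u → (∀ z, 0 ≤ u z) →
        MemLp u 1 volume → MemLp u ⊤ volume →
        ∀ R : ℝ,
          R = (eLpNorm u 1 volume).toReal ^ ((1 : ℝ) / n) *
                (eLpNorm u ⊤ volume).toReal ^ (-(1 : ℝ) / n) →
        ∀ x : EuclideanSpace ℝ (Fin n),
          (∫ z in Metric.ball x R, |u z| / ‖x - z‖ ^ (n - 1)) ≤
              C * (eLpNorm u ⊤ volume).toReal * R ∧
          (∫ z in (Metric.ball x R)ᶜ, |u z| / ‖x - z‖ ^ (n - 1)) ≤
              C * (eLpNorm u ((3 : ℝ≥0∞) / 2) volume).toReal *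
                R ^ (1 - 2 * (n : ℝ) / 3) := by
  obtain ⟨j, rfl⟩ : ∃ j, n = j + 2 := ⟨n - 2, by omega⟩
  set E := EuclideanSpace ℝ (Fin (j + 2))
  set v := volume (ball (0 : E) 1) with hv
  have hv_ne_top : v ≠ ∞ := measure_ball_lt_top.ne
  set K₁ : ℝ := ((2 ^ (j+2) * v : ℝ≥0∞)).toReal with hK₁
  set K₂ : ℝ := (((2 ^ (j+3) * v : ℝ≥0∞)) ^ ((1:ℝ)/3)).toReal with hK₂
  refine ⟨max K₁ K₂ + 1, by positivity, ?_⟩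
  set C : ℝ := max K₁ K₂ + 1 with hC
  have hK₁C : K₁ ≤ C := by
    have h := le_max_left K₁ K₂
    rw [hC]; linarith
  have hK₂C : K₂ ≤ C := by
    have h := le_max_right K₁ K₂
    rw [hC]; linarith
  have hCpos : (0:ℝ) < C := by positivity
  intro u hu hu0 huL1 huLtop R hRdef x
  have hexp : j + 2 - 1 = j + 1 := rfl
  rw [hexp]
  have hexp_neg : 1 - 2 * ((j+2:ℕ) : ℝ) / 3 < 0 := by
    have : (0:ℝ) ≤ (j:ℝ) := Nat.cast_nonneg j
    push_cast
    nlinarith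
  -- measurability of the radial weight
  have hcont : Continuous fun z : E => ‖x - z‖ ^ (j+1) :=
    ((continuous_const.sub continuous_id).norm.pow _)
  have hg_meas : Measurable fun z : E => ENNReal.ofReal ((‖x - z‖ ^ (j+1))⁻¹) :=
    (hcont.measurable.inv).ennreal_ofReal
  have hf_meas : Measurable fun z : E => |u z| / ‖x - z‖ ^ (j+1) :=
    hu.abs.div hcont.measurable
  -- pointwise identity
  have hpt : ∀ z : E, ENNReal.ofReal (|u z| / ‖x - z‖ ^ (j+1))
      = (‖u z‖₊ : ℝ≥0∞) * ENNReal.ofReal ((‖x - z‖ ^ (j+1))⁻¹) := by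
    intro z
    rw [div_eq_mul_inv, ENNReal.ofReal_mul (abs_nonneg _)]
    congr 1
    rw [← Real.norm_eq_abs]; exact ofReal_norm_eq_enorm _
  rcases eq_or_ne (eLpNorm u 1 volume) 0 with h1 | h1
  · -- degenerate case : u = 0 a.e.
    have hu_ae : u =ᵐ[volume] 0 := (eLpNorm_eq_zero_iff hu.aestronglyMeasurable one_ne_zero).1 h1
    have hzero : (fun z : E => |u z| / ‖x - z‖ ^ (j+1)) =ᵐ[volume] 0 := by
      filter_upwards [hu_ae] with z hz
      simp [show u z = 0 from hz]
    have hR0 : R = 0 := by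
      rw [hRdef, h1]
      simp only [ENNReal.toReal_zero]
      rw [Real.zero_rpow (by positivity : ((1:ℝ)/(j+2:ℕ)) ≠ 0)]
      ring
    have hint : ∀ s : Set E, (∫ z in s, |u z| / ‖x - z‖ ^ (j+1)) = 0 := by
      intro s
      rw [integral_congr_ae (ae_restrict_of_ae hzero)]
      simp
    constructor
    · rw [hint, hR0, mul_zero]
    · rw [hint, hR0, Real.zero_rpow hexp_neg.ne, mul_zero]
  · -- main case
    have hL1_ne_top : eLpNorm u 1 volume ≠ ∞ := huL1.eLpNorm_ne_top
    have hM_ne_top : eLpNorm u ⊤ volume ≠ ∞ := huLtop.eLpNorm_ne_top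
    have hM_ne_zero : eLpNorm u ⊤ volume ≠ 0 := by
      intro h0
      exact h1 (by
        have hu_ae : u =ᵐ[volume] 0 :=
          (eLpNorm_eq_zero_iff hu.aestronglyMeasurable (by simp)).1 h0
        rw [eLpNorm_congr_ae hu_ae, eLpNorm_zero])
    set M := eLpNorm u ⊤ volume with hM
    have hMr_pos : 0 < M.toReal := ENNReal.toReal_pos hM_ne_zero hM_ne_top
    have hL1r_pos : 0 < (eLpNorm u 1 volume).toReal := ENNReal.toReal_pos h1 hL1_ne_top
    have hRpos : 0 < R := by
      rw [hRdef]
      exact mul_pos (Real.rpow_pos_of_pos hL1r_pos _) (Real.rpow_pos_of_pos hMr_pos _)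
    -- a.e. bound by essential sup
    have hMa : ∀ᵐ z ∂volume, (‖u z‖₊ : ℝ≥0∞) ≤ M := by
      rw [hM, eLpNorm_exponent_top]
      exact enorm_ae_le_eLpNormEssSup u volume
    -- L^{3/2} seminorm formula and finiteness
    have heq32 : eLpNorm u ((3:ℝ≥0∞)/2) volume
        = (∫⁻ z, (‖u z‖₊ : ℝ≥0∞) ^ ((3:ℝ)/2)) ^ ((2:ℝ)/3) := by
      rw [eLpNorm_eq_lintegral_rpow_enorm_toReal (by norm_num)
        (ENNReal.div_lt_top (by norm_num) (by norm_num)).ne]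
      norm_num [ENNReal.toReal_div, enorm_eq_nnnorm]
    have h32_ne_top : eLpNorm u ((3:ℝ≥0∞)/2) volume ≠ ∞ := by
      rw [heq32]
      apply ENNReal.rpow_ne_top_of_nonneg (by norm_num)
      have hb : ∫⁻ z, (‖u z‖₊ : ℝ≥0∞) ^ ((3:ℝ)/2)
          ≤ M ^ ((1:ℝ)/2) * ∫⁻ z, (‖u z‖₊ : ℝ≥0∞) := by
        rw [← lintegral_const_mul' _ _ (ENNReal.rpow_ne_top_of_nonneg (by norm_num) hM_ne_top)]
        refine lintegral_mono_ae ?_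
        filter_upwards [hMa] with z hz
        rcases eq_or_ne ((‖u z‖₊ : ℝ≥0∞)) 0 with ha | ha
        · rw [ha, ENNReal.zero_rpow_of_pos (by norm_num)]
          exact zero_le
        · have : ((‖u z‖₊ : ℝ≥0∞)) ^ ((3:ℝ)/2)
              = ((‖u z‖₊ : ℝ≥0∞)) ^ ((1:ℝ)/2) * (‖u z‖₊ : ℝ≥0∞) := by
            rw [show (3:ℝ)/2 = 1/2 + 1 by norm_num,
              ENNReal.rpow_add _ _ ha ENNReal.coe_ne_top, ENNReal.rpow_one]
          rw [this]
          exact mul_le_mul_left (ENNReal.rpow_le_rpow hz (by norm_num)) _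
      refine ne_of_lt (lt_of_le_of_lt hb ?_)
      rw [show (∫⁻ z, (‖u z‖₊ : ℝ≥0∞)) = eLpNorm u 1 volume from (eLpNorm_one_eq_lintegral_enorm (f := u) (μ := volume)).symm]
      exact ENNReal.mul_lt_top
        (ENNReal.rpow_ne_top_of_nonneg (by norm_num) hM_ne_top).lt_top
        hL1_ne_top.lt_top
    constructor
    · -- NEAR PART
      have hBB : (∫ z in ball x R, |u z| / ‖x - z‖ ^ (j+1))
          = (∫⁻ z in ball x R, ENNReal.ofReal (|u z| / ‖x - z‖ ^ (j+1))).toReal := by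
        refine integral_eq_lintegral_of_nonneg_ae (ae_of_all _ fun z => by positivity)
          hf_meas.aestronglyMeasurable
      have hlin : (∫⁻ z in ball x R, ENNReal.ofReal (|u z| / ‖x - z‖ ^ (j+1)))
          ≤ M * (2 ^ (j+2) * v * ENNReal.ofReal R) := by
        calc (∫⁻ z in ball x R, ENNReal.ofReal (|u z| / ‖x - z‖ ^ (j+1)))
            = ∫⁻ z in ball x R, (‖u z‖₊ : ℝ≥0∞) * ENNReal.ofReal ((‖x - z‖ ^ (j+1))⁻¹) :=
              lintegral_congr fun z => hpt z
          _ ≤ ∫⁻ z in ball x R, M * ENNReal.ofReal ((‖x - z‖ ^ (j+1))⁻¹) := by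
              refine lintegral_mono_ae ?_
              filter_upwards [ae_restrict_of_ae hMa] with z hz
              exact mul_le_mul_left hz _
          _ = M * ∫⁻ z in ball x R, ENNReal.ofReal ((‖x - z‖ ^ (j+1))⁻¹) :=
              lintegral_const_mul' _ _ hM_ne_top
          _ ≤ M * (2 ^ (j+2) * v * ENNReal.ofReal R) := by
              refine mul_le_mul_right ?_ _
              exact my_near_bound (j+1) x R hRpos
      have hfin : M * (2 ^ (j+2) * v * ENNReal.ofReal R) ≠ ∞ := by
        refine ENNReal.mul_ne_top hM_ne_top ?_
        exact ENNReal.mul_ne_top (ENNReal.mul_ne_top (by simp) hv_ne_top) ENNReal.ofReal_ne_top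
      have := ENNReal.toReal_mono hfin hlin
      rw [← hBB] at this
      refine this.trans ?_
      rw [ENNReal.toReal_mul, ENNReal.toReal_mul, ENNReal.toReal_ofReal hRpos.le]
      have h1' : M.toReal * ((2 ^ (j+2) * v : ℝ≥0∞).toReal * R)
          ≤ M.toReal * (C * R) := by
        refine mul_le_mul_of_nonneg_left ?_ ENNReal.toReal_nonneg
        exact mul_le_mul_of_nonneg_right (hK₁ ▸ hK₁C) hRpos.le
      calc M.toReal * ((2 ^ (j+2) * v : ℝ≥0∞).toReal * R) ≤ M.toReal * (C * R) := h1'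
        _ = C * M.toReal * R := by ring
    · -- FAR PART
      have hBB : (∫ z in (ball x R)ᶜ, |u z| / ‖x - z‖ ^ (j+1))
          = (∫⁻ z in (ball x R)ᶜ, ENNReal.ofReal (|u z| / ‖x - z‖ ^ (j+1))).toReal := by
        refine integral_eq_lintegral_of_nonneg_ae (ae_of_all _ fun z => by positivity)
          hf_meas.aestronglyMeasurable
      set X : ℝ := R ^ (1 - 2 * ((j+2:ℕ) : ℝ) / 3) with hX
      have hXpos : 0 < X := Real.rpow_pos_of_pos hRpos _
      -- Hölder
      have hconj : Real.HolderConjugate ((3:ℝ)/2) 3 := by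
        constructor <;> norm_num
      have hhold := ENNReal.lintegral_mul_le_Lp_mul_Lq (volume.restrict (ball x R)ᶜ) hconj
        (hu.nnnorm.coe_nnreal_ennreal).aemeasurable hg_meas.aemeasurable
      -- factor 1
      have hfac1 : (∫⁻ z in (ball x R)ᶜ, (‖u z‖₊ : ℝ≥0∞) ^ ((3:ℝ)/2)) ^ ((1:ℝ)/((3:ℝ)/2))
          ≤ eLpNorm u ((3:ℝ≥0∞)/2) volume := by
        rw [heq32, show (1:ℝ)/((3:ℝ)/2) = (2:ℝ)/3 by norm_num]
        exact ENNReal.rpow_le_rpow (setLIntegral_le_lintegral _ _) (by norm_num)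
      -- factor 2
      have hfac2 : (∫⁻ z in (ball x R)ᶜ, (ENNReal.ofReal ((‖x - z‖ ^ (j+1))⁻¹)) ^ ((3:ℝ)))
            ^ ((1:ℝ)/3)
          ≤ (2 ^ (j+3) * v) ^ ((1:ℝ)/3) * ENNReal.ofReal X := by
        have hcongr : (∫⁻ z in (ball x R)ᶜ, (ENNReal.ofReal ((‖x - z‖ ^ (j+1))⁻¹)) ^ ((3:ℝ)))
            = ∫⁻ z in (ball x R)ᶜ, ENNReal.ofReal ((‖x - z‖ ^ (3*j+3))⁻¹) := by
          refine lintegral_congr fun z => ?_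
          rw [ENNReal.ofReal_rpow_of_nonneg (by positivity) (by norm_num)]
          congr 1
          rw [show (3:ℝ) = ((3:ℕ):ℝ) by norm_num, Real.rpow_natCast, ← inv_pow, ← pow_mul]
          congr 2
          ring
        rw [hcongr]
        calc (∫⁻ z in (ball x R)ᶜ, ENNReal.ofReal ((‖x - z‖ ^ (3*j+3))⁻¹)) ^ ((1:ℝ)/3)
            ≤ (2 ^ (j+3) * v * ENNReal.ofReal ((R ^ (2*j+1))⁻¹)) ^ ((1:ℝ)/3) :=
              ENNReal.rpow_le_rpow (my_far_bound j x R hRpos) (by norm_num)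
          _ = (2 ^ (j+3) * v) ^ ((1:ℝ)/3) * (ENNReal.ofReal ((R ^ (2*j+1))⁻¹)) ^ ((1:ℝ)/3) :=
              ENNReal.mul_rpow_of_nonneg _ _ (by norm_num)
          _ = (2 ^ (j+3) * v) ^ ((1:ℝ)/3) * ENNReal.ofReal X := by
              congr 1
              have hinv : ((R:ℝ) ^ (2*j+1))⁻¹ = R ^ (-(((2*j+1:ℕ)):ℝ)) := by
                rw [← Real.rpow_natCast R (2*j+1), ← Real.rpow_neg hRpos.le]
              rw [hinv, ENNReal.ofReal_rpow_of_pos (Real.rpow_pos_of_pos hRpos _),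
                ← Real.rpow_mul hRpos.le, hX]
              congr 1
              push_cast
              ring
      -- combine
      have hlin : (∫⁻ z in (ball x R)ᶜ, ENNReal.ofReal (|u z| / ‖x - z‖ ^ (j+1)))
          ≤ eLpNorm u ((3:ℝ≥0∞)/2) volume * ((2 ^ (j+3) * v) ^ ((1:ℝ)/3) * ENNReal.ofReal X) := by
        calc (∫⁻ z in (ball x R)ᶜ, ENNReal.ofReal (|u z| / ‖x - z‖ ^ (j+1)))
            = ∫⁻ z in (ball x R)ᶜ,
                (‖u z‖₊ : ℝ≥0∞) * ENNReal.ofReal ((‖x - z‖ ^ (j+1))⁻¹) :=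
              lintegral_congr fun z => hpt z
          _ ≤ (∫⁻ z in (ball x R)ᶜ, (‖u z‖₊ : ℝ≥0∞) ^ ((3:ℝ)/2)) ^ ((1:ℝ)/((3:ℝ)/2)) *
                (∫⁻ z in (ball x R)ᶜ, (ENNReal.ofReal ((‖x - z‖ ^ (j+1))⁻¹)) ^ ((3:ℝ)))
                  ^ ((1:ℝ)/3) := hhold
          _ ≤ eLpNorm u ((3:ℝ≥0∞)/2) volume * ((2 ^ (j+3) * v) ^ ((1:ℝ)/3) * ENNReal.ofReal X) :=
              mul_le_mul' hfac1 hfac2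
      have hfin : eLpNorm u ((3:ℝ≥0∞)/2) volume *
          ((2 ^ (j+3) * v) ^ ((1:ℝ)/3) * ENNReal.ofReal X) ≠ ∞ := by
        refine ENNReal.mul_ne_top h32_ne_top (ENNReal.mul_ne_top ?_ ENNReal.ofReal_ne_top)
        exact ENNReal.rpow_ne_top_of_nonneg (by norm_num)
          (ENNReal.mul_ne_top (by simp) hv_ne_top)
      have := ENNReal.toReal_mono hfin hlin
      rw [← hBB] at this
      refine this.trans ?_
      rw [ENNReal.toReal_mul, ENNReal.toReal_mul, ENNReal.toReal_ofReal hXpos.le]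
      have : (eLpNorm u ((3:ℝ≥0∞)/2) volume).toReal * (K₂ * X)
          ≤ (eLpNorm u ((3:ℝ≥0∞)/2) volume).toReal * (C * X) := by
        refine mul_le_mul_of_nonneg_left ?_ ENNReal.toReal_nonneg
        exact mul_le_mul_of_nonneg_right hK₂C hXpos.le
      calc (eLpNorm u ((3:ℝ≥0∞)/2) volume).toReal *
            ((((2 ^ (j+3) * v : ℝ≥0∞)) ^ ((1:ℝ)/3)).toReal * X)
          = (eLpNorm u ((3:ℝ≥0∞)/2) volume).toReal * (K₂ * X) := by rw [hK₂]
        _ ≤ (eLpNorm u ((3:ℝ≥0∞)/2) volume).toReal * (C * X) := this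
        _ = C * (eLpNorm u ((3:ℝ≥0∞)/2) volume).toReal * X := by ring
end

section
/- Let n ≥ 1 and consider the semigroup kernel: for f ∈ L¹(ℝⁿ) and τ > 0, define (Sₙ(τ)f)(ξ) = (4π a(τ))^{−n/2} ∫_{ℝⁿ} f(η) exp(−|ξ − e^{−τ/2} η|²/(4a(τ))) dη, where a(τ) = 1 − e^{−τ}. If f ∈ L¹(ℝⁿ), then Sₙ(τ)f converges in L¹(ℝⁿ) to (∫f) · 𝒢ₙ as τ → ∞, where 𝒢ₙ(ξ) = (4π)^{−n/2} e^{−|ξ|²/4}. -/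
open MeasureTheory Real Filter
open scoped ENNReal NNReal Topology

variable {n : ℕ}

lemma gauss_integrable (n : ℕ) {b : ℝ} (hb : 0 < b) :
    Integrable (fun v : EuclideanSpace ℝ (Fin n) => rexp (-b * ‖v‖ ^ 2)) := by
  have h := (GaussianFourier.integrable_cexp_neg_mul_sq_norm_add (V := EuclideanSpace ℝ (Fin n))
    (b := (b : ℂ)) (by simpa using hb) 0 0).norm
  refine h.congr (Filter.Eventually.of_forall fun v => ?_)
  simp only [zero_mul, add_zero, Complex.norm_exp]
  norm_num
  left
  norm_cast

lemma gauss_integral (n : ℕ) {b : ℝ} (hb : 0 < b) :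
    ∫ v : EuclideanSpace ℝ (Fin n), rexp (-b * ‖v‖ ^ 2) = (π / b) ^ ((n : ℝ) / 2) := by
  have := GaussianFourier.integral_rexp_neg_mul_sq_norm (V := EuclideanSpace ℝ (Fin n)) hb
  simpa using this

noncomputable def gs (n : ℕ) (a : ℝ) (x : EuclideanSpace ℝ (Fin n)) : ℝ :=
  (4 * π * a) ^ (-(n : ℝ) / 2) * rexp (-‖x‖ ^ 2 / (4 * a))

lemma gs_pos {a : ℝ} (ha : 0 < a) (x : EuclideanSpace ℝ (Fin n)) : 0 < gs n a x := by
  unfold gs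
  have : (0:ℝ) < 4 * π * a := by positivity
  positivity

lemma gs_eq {a : ℝ} (ha : 0 < a) :
    gs n a = fun x : EuclideanSpace ℝ (Fin n) =>
      (4 * π * a) ^ (-(n : ℝ) / 2) * rexp (-(1/(4*a)) * ‖x‖ ^ 2) := by
  funext x; unfold gs; ring_nf

lemma integrable_gs {a : ℝ} (ha : 0 < a) : Integrable (gs n a) := by
  rw [gs_eq ha]
  exact (gauss_integrable n (by positivity)).const_mul _

lemma integral_gs {a : ℝ} (ha : 0 < a) : ∫ x, gs n a x = 1 := by
  rw [gs_eq ha]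
  rw [integral_const_mul, gauss_integral n (by positivity)]
  have h1 : π / (1/(4*a)) = 4 * π * a := by field_simp
  rw [h1]
  have h2 : (0:ℝ) < 4 * π * a := by positivity
  rw [show -(n:ℝ)/2 = -((n:ℝ)/2) by ring, Real.rpow_neg h2.le]
  exact inv_mul_cancel₀ (by positivity)

lemma bnd_def (n : ℕ) : True := trivial

noncomputable def bnd (n : ℕ) (ξ : EuclideanSpace ℝ (Fin n)) : ℝ :=
  (2 * π) ^ (-(n : ℝ) / 2) * rexp (1/4) * rexp (-(1/8) * ‖ξ‖ ^ 2)

lemma integrable_bnd : Integrable (bnd n) :=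
  (gauss_integrable n (by norm_num)).const_mul _

lemma exp_neg_le (ha : 0 < (4:ℝ) * a) (x : EuclideanSpace ℝ (Fin n)) :
    rexp (-‖x‖ ^ 2 / (4 * a)) ≤ 1 :=
  Real.exp_le_one_iff.mpr (div_nonpos_iff.mpr (Or.inr ⟨neg_nonpos.mpr (by positivity), ha.le⟩))

lemma gs_le_coeff {a : ℝ} (ha : 0 < a) (x : EuclideanSpace ℝ (Fin n)) :
    gs n a x ≤ (4 * π * a) ^ (-(n : ℝ) / 2) := by
  have h : (0:ℝ) < 4 * π * a := by positivity
  have := exp_neg_le (a := a) (by linarith) x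
  calc gs n a x ≤ (4 * π * a) ^ (-(n : ℝ) / 2) * 1 := by
        unfold gs
        apply mul_le_mul_of_nonneg_left _ (Real.rpow_nonneg h.le _)
        rw [show (4:ℝ) * a = 4 * a by ring]
        exact exp_neg_le (by linarith) x
    _ = _ := mul_one _

lemma gs_le_bnd {a : ℝ} (ha2 : 1/2 ≤ a) (h1 : a ≤ 1) (ξ y : EuclideanSpace ℝ (Fin n))
    (hy : ‖y‖ ≤ 1) : gs n a (ξ - y) ≤ bnd n ξ := by
  have ha : (0:ℝ) < a := by linarith
  have hπ : (0:ℝ) < π := Real.pi_pos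
  have hnn : (0:ℝ) ≤ (n:ℝ) := Nat.cast_nonneg n
  have hcoeff : (4 * π * a) ^ (-(n : ℝ) / 2) ≤ (2 * π) ^ (-(n : ℝ) / 2) := by
    apply Real.rpow_le_rpow_of_nonpos (by positivity) (by nlinarith) (by linarith [div_nonneg hnn (by norm_num : (0:ℝ) ≤ 2)])
  have hns : ‖ξ‖ ^ 2 / 2 - 1 ≤ ‖ξ - y‖ ^ 2 := by
    have h2 := norm_sub_norm_le ξ y
    have h3 := norm_nonneg (ξ - y)
    have h4 := norm_nonneg ξ
    have h5 := norm_nonneg y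
    rcases le_or_gt ‖ξ‖ 1 with h|h
    · nlinarith
    · have h6 : 0 ≤ ‖ξ‖ - ‖y‖ := by linarith
      have h7 : (‖ξ‖ - ‖y‖) ^ 2 ≤ ‖ξ - y‖ ^ 2 := by nlinarith
      nlinarith [sq_nonneg (‖ξ‖ - 2)]
  have hexp : rexp (-‖ξ - y‖ ^ 2 / (4 * a)) ≤ rexp (1/4) * rexp (-(1/8) * ‖ξ‖ ^ 2) := by
    rw [← Real.exp_add]
    apply Real.exp_le_exp.mpr
    have e1 : ‖ξ - y‖ ^ 2 / 4 ≤ ‖ξ - y‖ ^ 2 / (4 * a) := by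
      rw [div_le_div_iff₀ (by norm_num) (by positivity)]
      nlinarith [sq_nonneg ‖ξ - y‖]
    have e2 : (‖ξ‖ ^ 2 / 2 - 1) / 4 ≤ ‖ξ - y‖ ^ 2 / 4 := by linarith
    have : -(‖ξ - y‖ ^ 2 / (4 * a)) ≤ -((‖ξ‖ ^ 2 / 2 - 1) / 4) := by linarith
    rw [neg_div]
    linarith
  unfold gs bnd
  have h6 : (0:ℝ) ≤ (4 * π * a) ^ (-(n : ℝ) / 2) := Real.rpow_nonneg (by positivity) _
  calc (4 * π * a) ^ (-(n : ℝ) / 2) * rexp (-‖ξ - y‖ ^ 2 / (4 * a))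
      ≤ (2 * π) ^ (-(n : ℝ) / 2) * (rexp (1/4) * rexp (-(1/8) * ‖ξ‖ ^ 2)) := by
        apply mul_le_mul hcoeff hexp (Real.exp_nonneg _) (Real.rpow_nonneg (by positivity) _)
    _ = _ := by ring

lemma gs_one_le_bnd (ξ : EuclideanSpace ℝ (Fin n)) : gs n 1 ξ ≤ bnd n ξ := by
  have := gs_le_bnd (n := n) (a := 1) (by norm_num) le_rfl ξ 0 (by simp)
  simpa using this

lemma continuous_gs_shift {a : ℝ} (v : EuclideanSpace ℝ (Fin n)) :
    Continuous (fun ξ : EuclideanSpace ℝ (Fin n) => gs n a (ξ - v)) := by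
  unfold gs
  exact continuous_const.mul (Real.continuous_exp.comp
    ((((continuous_id.sub continuous_const).norm.pow 2).neg).div_const _))

lemma lintegral_gs_shift {a : ℝ} (ha : 0 < a) (v : EuclideanSpace ℝ (Fin n)) :
    ∫⁻ ξ, (‖gs n a (ξ - v)‖₊ : ℝ≥0∞) = 1 := by
  have hint : Integrable (fun ξ : EuclideanSpace ℝ (Fin n) => gs n a (ξ - v)) :=
    (integrable_gs ha).comp_sub_right v
  have hpos : 0 ≤ᵐ[volume] fun ξ : EuclideanSpace ℝ (Fin n) => gs n a (ξ - v) :=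
    Filter.Eventually.of_forall fun ξ => (gs_pos ha _).le
  have h1 : ∀ ξ : EuclideanSpace ℝ (Fin n),
      (‖gs n a (ξ - v)‖₊ : ℝ≥0∞) = ENNReal.ofReal (gs n a (ξ - v)) := fun ξ =>
    Real.enorm_eq_ofReal (gs_pos ha _).le
  simp_rw [h1]
  rw [← ofReal_integral_eq_lintegral_ofReal hint hpos]
  rw [integral_sub_right_eq_self (gs n a) v, integral_gs ha]
  norm_num

lemma H_le {a : ℝ} (ha : 0 < a) (v : EuclideanSpace ℝ (Fin n)) :
    ∫⁻ ξ, (‖gs n a (ξ - v) - gs n 1 ξ‖₊ : ℝ≥0∞) ≤ 2 := by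
  have hmeas : Measurable fun ξ : EuclideanSpace ℝ (Fin n) => (‖gs n a (ξ - v)‖₊ : ℝ≥0∞) :=
    (continuous_gs_shift v).measurable.enorm
  calc ∫⁻ ξ, (‖gs n a (ξ - v) - gs n 1 ξ‖₊ : ℝ≥0∞)
      ≤ ∫⁻ ξ, ((‖gs n a (ξ - v)‖₊ : ℝ≥0∞) + ‖gs n 1 ξ‖₊) := by
        apply lintegral_mono fun ξ => ?_
        rw [← ENNReal.coe_add]
        exact ENNReal.coe_le_coe.mpr (nnnorm_sub_le _ _)
    _ = (∫⁻ ξ, (‖gs n a (ξ - v)‖₊ : ℝ≥0∞)) + ∫⁻ ξ, (‖gs n 1 ξ‖₊ : ℝ≥0∞) :=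
        lintegral_add_left hmeas _
    _ ≤ 2 := by
        rw [lintegral_gs_shift ha v]
        have := lintegral_gs_shift (n := n) one_pos 0
        simp only [sub_zero] at this
        rw [this]
        norm_num

lemma tendsto_params : Tendsto (fun τ : ℝ => ((1 - rexp (-τ), rexp (-τ / 2)) : ℝ × ℝ))
    atTop (𝓝 (1, 0)) := by
  have h1 : Tendsto (fun τ : ℝ => rexp (-τ)) atTop (𝓝 0) := tendsto_exp_neg_atTop_nhds_zero
  have h3 : Tendsto (fun τ : ℝ => τ / 2) atTop atTop := tendsto_id.atTop_div_const (by norm_num)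
  have h2 : Tendsto (fun τ : ℝ => rexp (-τ / 2)) atTop (𝓝 0) := by
    exact (tendsto_exp_neg_atTop_nhds_zero.comp h3).congr
      (fun τ => by simp [Function.comp, neg_div])
  have h4 : Tendsto (fun τ : ℝ => 1 - rexp (-τ)) atTop (𝓝 1) := by
    simpa using (tendsto_const_nhds (x := (1:ℝ)) (f := atTop)).sub h1
  exact h4.prodMk_nhds h2

lemma gs_pointwise (ξ η : EuclideanSpace ℝ (Fin n)) :
    Tendsto (fun τ : ℝ => gs n (1 - rexp (-τ)) (ξ - rexp (-τ / 2) • η)) atTop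
      (𝓝 (gs n 1 ξ)) := by
  have hφ : ContinuousAt (fun p : ℝ × ℝ =>
      (4 * π * p.1) ^ (-(n : ℝ) / 2) * rexp (-‖ξ - p.2 • η‖ ^ 2 / (4 * p.1))) (1, 0) := by
    have hπ : (0:ℝ) < π := Real.pi_pos
    have hc1 : ContinuousAt (fun p : ℝ × ℝ => (4 * π * p.1) ^ (-(n : ℝ) / 2)) (1, 0) := by
      apply ContinuousAt.comp (x := ((1:ℝ),(0:ℝ)))
        (g := fun x : ℝ => x ^ (-(n : ℝ) / 2))
      · exact Real.continuousAt_rpow_const _ _ (Or.inl (by norm_num))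
      · exact (continuous_const.mul continuous_fst).continuousAt
    have hc2 : ContinuousAt (fun p : ℝ × ℝ => rexp (-‖ξ - p.2 • η‖ ^ 2 / (4 * p.1))) (1, 0) := by
      apply Real.continuous_exp.continuousAt.comp
      apply ContinuousAt.div
      · exact (((continuous_const.sub (continuous_snd.smul continuous_const)).norm.pow 2).neg).continuousAt
      · exact (continuous_const.mul continuous_fst).continuousAt
      · norm_num
    exact hc1.mul hc2
  have h := hφ.tendsto.comp tendsto_params
  simp only [Function.comp_def] at h
  convert h using 2
  all_goals norm_num [gs]

lemma measurable_diff (a c : ℝ) (η : EuclideanSpace ℝ (Fin n)) :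
    Measurable (fun ξ : EuclideanSpace ℝ (Fin n) =>
      (‖gs n a (ξ - c • η) - gs n 1 ξ‖₊ : ℝ≥0∞)) := by
  have h1 : Continuous (fun ξ : EuclideanSpace ℝ (Fin n) => gs n a (ξ - c • η)) :=
    continuous_gs_shift _
  have h2 : Continuous (fun ξ : EuclideanSpace ℝ (Fin n) => gs n 1 ξ) := by
    simpa using continuous_gs_shift (n := n) (a := 1) 0
  exact (h1.sub h2).measurable.enorm

lemma H_tendsto (η : EuclideanSpace ℝ (Fin n)) :
    Tendsto (fun τ : ℝ => ∫⁻ ξ,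
        (‖gs n (1 - rexp (-τ)) (ξ - rexp (-τ / 2) • η) - gs n 1 ξ‖₊ : ℝ≥0∞))
      atTop (𝓝 0) := by
  have hev : ∀ᶠ τ : ℝ in atTop, 1/2 ≤ 1 - rexp (-τ) ∧ 1 - rexp (-τ) ≤ 1 ∧
      ‖rexp (-τ / 2) • η‖ ≤ 1 := by
    have h1 : Tendsto (fun τ : ℝ => rexp (-τ)) atTop (𝓝 0) := tendsto_exp_neg_atTop_nhds_zero
    have h2 : ∀ᶠ τ : ℝ in atTop, rexp (-τ) ≤ 1/2 :=
      h1.eventually_le_const (by norm_num)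
    have h3 : Tendsto (fun τ : ℝ => ‖rexp (-τ / 2) • η‖) atTop (𝓝 0) := by
      have h4 : Tendsto (fun τ : ℝ => τ / 2) atTop atTop :=
        tendsto_id.atTop_div_const (by norm_num)
      have h5 : Tendsto (fun τ : ℝ => rexp (-τ / 2)) atTop (𝓝 0) :=
        (tendsto_exp_neg_atTop_nhds_zero.comp h4).congr
          (fun τ => by simp [Function.comp, neg_div])
      have := (h5.norm).mul_const ‖η‖
      simp only [norm_zero, zero_mul] at this
      refine this.congr fun τ => ?_
      rw [norm_smul]
    have h6 : ∀ᶠ τ : ℝ in atTop, ‖rexp (-τ / 2) • η‖ ≤ 1 :=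
      h3.eventually_le_const (by norm_num)
    filter_upwards [h2, h6] with τ hτ2 hτ6
    refine ⟨by linarith, by linarith [Real.exp_pos (-τ)], hτ6⟩
  have hbd_int : Integrable (fun ξ : EuclideanSpace ℝ (Fin n) => 2 * bnd n ξ) :=
    integrable_bnd.const_mul 2
  have hbd_nonneg : ∀ ξ : EuclideanSpace ℝ (Fin n), 0 ≤ 2 * bnd n ξ := by
    intro ξ
    unfold bnd
    positivity
  have h0 : (0 : ℝ≥0∞) = ∫⁻ _ : EuclideanSpace ℝ (Fin n), 0 := by simp
  rw [h0]
  apply tendsto_lintegral_filter_of_dominated_convergence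
      (fun ξ => ENNReal.ofReal (2 * bnd n ξ))
  · exact Eventually.of_forall fun τ => measurable_diff _ _ _
  · filter_upwards [hev] with τ ⟨ha2, ha1, hn⟩
    apply ae_of_all
    intro ξ
    have ha : (0:ℝ) < 1 - rexp (-τ) := by linarith
    have hb1 : gs n (1 - rexp (-τ)) (ξ - rexp (-τ / 2) • η) ≤ bnd n ξ :=
      gs_le_bnd ha2 ha1 ξ _ hn
    have hb2 : gs n 1 ξ ≤ bnd n ξ := gs_one_le_bnd ξ
    have hp1 : 0 ≤ gs n (1 - rexp (-τ)) (ξ - rexp (-τ / 2) • η) := (gs_pos ha _).le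
    have hp2 : 0 ≤ gs n 1 ξ := (gs_pos one_pos _).le
    rw [← enorm_eq_nnnorm, Real.enorm_eq_ofReal_abs]
    apply ENNReal.ofReal_le_ofReal
    rw [abs_sub_le_iff]
    constructor <;> linarith
  · rw [← ofReal_integral_eq_lintegral_ofReal hbd_int (ae_of_all _ hbd_nonneg)]
    exact ENNReal.ofReal_ne_top
  · apply ae_of_all
    intro ξ
    have := (gs_pointwise ξ η).sub_const (gs n 1 ξ)
    rw [sub_self] at this
    have h2 := this.nnnorm
    rw [nnnorm_zero] at h2
    have h3 := (ENNReal.tendsto_coe (f := atTop)).mpr h2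
    simpa using h3

lemma continuous_gs (a : ℝ) : Continuous (gs n a) := by
  simpa using continuous_gs_shift (n := n) (a := a) 0

lemma continuous_gs_pair (a c : ℝ) :
    Continuous fun p : EuclideanSpace ℝ (Fin n) × EuclideanSpace ℝ (Fin n) =>
      gs n a (p.1 - c • p.2) :=
  (continuous_gs a).comp (continuous_fst.sub (continuous_snd.const_smul c))

lemma key (n : ℕ) (f : EuclideanSpace ℝ (Fin n) → ℝ) (hm : Measurable f)
    (hf : Integrable f volume) :
    Tendsto
      (fun τ : ℝ =>
        (eLpNorm
          (fun ξ : EuclideanSpace ℝ (Fin n) =>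
            (4 * π * (1 - Real.exp (-τ))) ^ (-(n : ℝ) / 2) *
                (∫ η, f η *
                  Real.exp (-‖ξ - Real.exp (-τ / 2) • η‖ ^ 2 / (4 * (1 - Real.exp (-τ))))) -
              (∫ x, f x) * ((4 * π) ^ (-(n : ℝ) / 2) * Real.exp (-‖ξ‖ ^ 2 / 4)))
          1 volume).toReal)
      atTop (𝓝 0) := by
  set B : ℝ → ℝ≥0∞ := fun τ => ∫⁻ η, (‖f η‖₊ : ℝ≥0∞) *
      ∫⁻ ξ, (‖gs n (1 - rexp (-τ)) (ξ - rexp (-τ / 2) • η) - gs n 1 ξ‖₊ : ℝ≥0∞) with hB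
  -- B tends to 0
  have hBto : Tendsto B atTop (𝓝 0) := by
    have h00 : (𝓝 (0 : ℝ≥0∞)) = 𝓝 (∫⁻ _ : EuclideanSpace ℝ (Fin n), (0:ℝ≥0∞)) := by simp
    rw [hB, h00]
    apply tendsto_lintegral_filter_of_dominated_convergence
        (fun η => 2 * (‖f η‖₊ : ℝ≥0∞))
    · apply Eventually.of_forall
      intro τ
      apply (hm.enorm).mul
      apply Measurable.lintegral_prod_right (f := fun η ξ =>
        (‖gs n (1 - rexp (-τ)) (ξ - rexp (-τ / 2) • η) - gs n 1 ξ‖₊ : ℝ≥0∞))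
      apply Measurable.coe_nnreal_ennreal
      apply Measurable.nnnorm
      apply Continuous.measurable
      exact ((continuous_gs_pair _ _).comp continuous_swap).sub
        ((continuous_gs 1).comp continuous_snd)
    · filter_upwards [eventually_gt_atTop (0:ℝ)] with τ hτ
      apply ae_of_all
      intro η
      have ha : (0:ℝ) < 1 - rexp (-τ) := by
        have := Real.exp_lt_one_iff.mpr (neg_lt_zero.mpr hτ)
        linarith
      calc (‖f η‖₊ : ℝ≥0∞) * _ ≤ (‖f η‖₊ : ℝ≥0∞) * 2 := mul_le_mul_right (H_le ha _) _
        _ = 2 * (‖f η‖₊ : ℝ≥0∞) := mul_comm _ _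
    · rw [lintegral_const_mul _ hm.nnnorm.coe_nnreal_ennreal]
      exact ENNReal.mul_ne_top (by norm_num) hf.2.ne
    · apply ae_of_all
      intro η
      have := ENNReal.Tendsto.const_mul (H_tendsto (n := n) η)
        (Or.inr (ENNReal.coe_ne_top (r := ‖f η‖₊)))
      simpa using this
  -- eLpNorm bounded by B eventually
  have hle : ∀ᶠ τ : ℝ in atTop,
      eLpNorm
          (fun ξ : EuclideanSpace ℝ (Fin n) =>
            (4 * π * (1 - Real.exp (-τ))) ^ (-(n : ℝ) / 2) *
                (∫ η, f η *
                  Real.exp (-‖ξ - Real.exp (-τ / 2) • η‖ ^ 2 / (4 * (1 - Real.exp (-τ))))) -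
              (∫ x, f x) * ((4 * π) ^ (-(n : ℝ) / 2) * Real.exp (-‖ξ‖ ^ 2 / 4)))
          1 volume ≤ B τ := by
    filter_upwards [eventually_gt_atTop (0:ℝ)] with τ hτ
    set a : ℝ := 1 - rexp (-τ) with ha_def
    set c : ℝ := rexp (-τ / 2) with hc_def
    have ha : (0:ℝ) < a := by
      have := Real.exp_lt_one_iff.mpr (neg_lt_zero.mpr hτ)
      rw [ha_def]; linarith
    have hGcont : ∀ ξ : EuclideanSpace ℝ (Fin n),
        Continuous fun η : EuclideanSpace ℝ (Fin n) => gs n a (ξ - c • η) :=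
      fun ξ => (continuous_gs a).comp (continuous_const.sub (continuous_id.const_smul c))
    have hfun : (fun ξ : EuclideanSpace ℝ (Fin n) =>
        (4 * π * a) ^ (-(n : ℝ) / 2) *
            (∫ η, f η * Real.exp (-‖ξ - c • η‖ ^ 2 / (4 * a))) -
          (∫ x, f x) * ((4 * π) ^ (-(n : ℝ) / 2) * Real.exp (-‖ξ‖ ^ 2 / 4))) =
        fun ξ => ∫ η, f η * (gs n a (ξ - c • η) - gs n 1 ξ) := by
      funext ξ
      have hint1 : Integrable (fun η => f η * gs n a (ξ - c • η)) := by
        have hb : ∀ᵐ η : EuclideanSpace ℝ (Fin n) ∂volume,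
            ‖gs n a (ξ - c • η)‖ ≤ (4 * π * a) ^ (-(n : ℝ) / 2) := by
          apply ae_of_all
          intro η
          rw [Real.norm_eq_abs, abs_of_nonneg (gs_pos ha _).le]
          exact gs_le_coeff ha _
        have := hf.bdd_mul ((hGcont ξ).aestronglyMeasurable) hb
        exact this.congr (ae_of_all _ fun η => mul_comm _ _)
      have hint2 : Integrable (fun η => f η * gs n 1 ξ) := hf.mul_const _
      have e1 : ∫ η, f η * (gs n a (ξ - c • η) - gs n 1 ξ) =
          (∫ η, f η * gs n a (ξ - c • η)) - ∫ η, f η * gs n 1 ξ := by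
        simp_rw [mul_sub]
        exact integral_sub hint1 hint2
      have e2 : ∫ η, f η * gs n a (ξ - c • η) =
          (4 * π * a) ^ (-(n : ℝ) / 2) *
            ∫ η, f η * rexp (-‖ξ - c • η‖ ^ 2 / (4 * a)) := by
        rw [← integral_const_mul]
        congr 1
        funext η
        unfold gs
        ring
      have e3 : ∫ η, f η * gs n 1 ξ =
          (∫ x, f x) * ((4 * π) ^ (-(n : ℝ) / 2) * Real.exp (-‖ξ‖ ^ 2 / 4)) := by
        rw [integral_mul_const]
        congr 2
        unfold gs
        norm_num
      rw [e1, e2, e3]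
    rw [hfun, eLpNorm_one_eq_lintegral_enorm]
    have hmeas_prod : AEMeasurable
        (Function.uncurry fun (ξ η : EuclideanSpace ℝ (Fin n)) =>
          (‖f η * (gs n a (ξ - c • η) - gs n 1 ξ)‖₊ : ℝ≥0∞))
        (volume.prod volume) := by
      apply Measurable.aemeasurable
      apply Measurable.coe_nnreal_ennreal
      apply Measurable.nnnorm
      apply Measurable.mul
      · exact hm.comp measurable_snd
      · apply Continuous.measurable
        exact (continuous_gs_pair a c).sub ((continuous_gs 1).comp continuous_fst)
    calc ∫⁻ ξ, (‖∫ η, f η * (gs n a (ξ - c • η) - gs n 1 ξ)‖₊ : ℝ≥0∞)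
        ≤ ∫⁻ ξ, ∫⁻ η, (‖f η * (gs n a (ξ - c • η) - gs n 1 ξ)‖₊ : ℝ≥0∞) :=
          lintegral_mono fun ξ => enorm_integral_le_lintegral_enorm _
      _ = ∫⁻ η, ∫⁻ ξ, (‖f η * (gs n a (ξ - c • η) - gs n 1 ξ)‖₊ : ℝ≥0∞) :=
          lintegral_lintegral_swap hmeas_prod
      _ = B τ := by
          rw [hB]
          apply lintegral_congr
          intro η
          simp_rw [nnnorm_mul, ENNReal.coe_mul]
          rw [lintegral_const_mul _ (measurable_diff a c η)]
  -- squeeze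
  have hcore : Tendsto (fun τ : ℝ =>
      eLpNorm
          (fun ξ : EuclideanSpace ℝ (Fin n) =>
            (4 * π * (1 - Real.exp (-τ))) ^ (-(n : ℝ) / 2) *
                (∫ η, f η *
                  Real.exp (-‖ξ - Real.exp (-τ / 2) • η‖ ^ 2 / (4 * (1 - Real.exp (-τ))))) -
              (∫ x, f x) * ((4 * π) ^ (-(n : ℝ) / 2) * Real.exp (-‖ξ‖ ^ 2 / 4)))
          1 volume) atTop (𝓝 0) :=
    tendsto_of_tendsto_of_tendsto_of_le_of_le' tendsto_const_nhds hBto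
      (Eventually.of_forall fun τ => zero_le) hle
  have := (ENNReal.tendsto_toReal (a := 0) (by simp)).comp hcore
  simpa [Function.comp_def] using this

/-- Long-time convergence of the Fokker–Planck (Mehler) semigroup: for `f ∈ L¹(ℝⁿ)`,
`Sₙ(τ)f → (∫ f) 𝒢ₙ` in `L¹` as `τ → ∞`, where
`(Sₙ(τ)f)(ξ) = (4π a(τ))^{−n/2} ∫ f(η) exp(−|ξ − e^{−τ/2}η|²/(4a(τ))) dη`,
`a(τ) = 1 − e^{−τ}`, and `𝒢ₙ(ξ) = (4π)^{−n/2} e^{−|ξ|²/4}`. -/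
theorem stmt6 (n : ℕ) (hn : 1 ≤ n)
    (f : EuclideanSpace ℝ (Fin n) → ℝ) (hf : Integrable f volume) :
    Tendsto
      (fun τ : ℝ =>
        (eLpNorm
          (fun ξ : EuclideanSpace ℝ (Fin n) =>
            (4 * π * (1 - Real.exp (-τ))) ^ (-(n : ℝ) / 2) *
                (∫ η, f η *
                  Real.exp (-‖ξ - Real.exp (-τ / 2) • η‖ ^ 2 / (4 * (1 - Real.exp (-τ))))) -
              (∫ x, f x) * ((4 * π) ^ (-(n : ℝ) / 2) * Real.exp (-‖ξ‖ ^ 2 / 4)))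
          1 volume).toReal)
      atTop (nhds 0) := by
  obtain ⟨g, hgsm, hfg⟩ := hf.1
  have hg : Integrable g volume := hf.congr hfg
  have hint : ∫ x, f x = ∫ x, g x := integral_congr_ae hfg
  have hinner : ∀ (τ : ℝ) (ξ : EuclideanSpace ℝ (Fin n)),
      (∫ η, f η * Real.exp (-‖ξ - Real.exp (-τ / 2) • η‖ ^ 2 / (4 * (1 - Real.exp (-τ))))) =
      ∫ η, g η * Real.exp (-‖ξ - Real.exp (-τ / 2) • η‖ ^ 2 / (4 * (1 - Real.exp (-τ)))) :=
    fun τ ξ => integral_congr_ae (hfg.mono fun η h => by simp only []; rw [h])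
  have hkey := key n g hgsm.measurable hg
  refine hkey.congr fun τ => ?_
  congr 1
  apply congrArg (fun F => eLpNorm F 1 volume)
  funext ξ
  rw [hinner τ ξ, hint]
end
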